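/- arXiv:2006.16491 — 2 statements merged into one kernel-verified Lean document; each statement's English description precedes it below -/
import Mathlib

section
/- Let n ≥ 1 be an integer and suppose there is a constant c > 0 such that |π(y) − α_n(y)| ≤ c·y/(log y)^{n+1} for all real y ≥ 2. Then Σ_{p ≤ √x} π(x/p) = Σ_{p ≤ √x} α_n(x/p) + O(x·log(log x)/(log x)^{n+1}) as x → ∞. -/
open Finset Filter

/-- The finite set of primes `p ≤ y` (for a real bound `y`). -/
noncomputable def primesUpTo (y : ℝ) : Finset ℕ :=
  (Finset.range (⌊y⌋₊ + 1)).filter Nat.Prime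

/-- The prime counting function `π(x)`: the number of primes `p ≤ x`. -/
noncomputable def primePi (x : ℝ) : ℕ := (primesUpTo x).card

/-- `α_n(x) = (x / log x) · ∑_{i=0}^{n-1} i! / (log x)^i`. -/
noncomputable def alpha (n : ℕ) (x : ℝ) : ℝ :=
  x / Real.log x * ∑ i ∈ Finset.range n, (Nat.factorial i : ℝ) / (Real.log x) ^ i

lemma mem_primesUpTo {y : ℝ} {p : ℕ} (hy : 0 ≤ y) :
    p ∈ primesUpTo y ↔ (p : ℝ) ≤ y ∧ p.Prime := by
  simp [primesUpTo, Finset.mem_filter, Finset.mem_range, Nat.lt_succ_iff, Nat.le_floor_iff hy]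

lemma primesUpTo_natCast (k : ℕ) :
    primesUpTo (k : ℝ) = (Finset.range (k + 1)).filter Nat.Prime := by
  simp [primesUpTo]

lemma primesUpTo_mono {y y' : ℝ} (h : y ≤ y') : primesUpTo y ⊆ primesUpTo y' := by
  apply Finset.filter_subset_filter
  apply Finset.range_subset_range.mpr
  have := Nat.floor_mono h
  omega

lemma primePi_le {y : ℝ} (hy : 0 ≤ y) : (primePi y : ℝ) ≤ y + 1 := by
  have h1 : primePi y ≤ ⌊y⌋₊ + 1 := by
    calc primePi y ≤ (Finset.range (⌊y⌋₊ + 1)).card := Finset.card_filter_le _ _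
    _ = ⌊y⌋₊ + 1 := Finset.card_range _
  have := Nat.floor_le hy
  calc (primePi y : ℝ) ≤ (⌊y⌋₊ : ℝ) + 1 := by exact_mod_cast h1
  _ ≤ y + 1 := by linarith

lemma chebyshev {n : ℕ} {c : ℝ} (hc : 0 < c)
    (h : ∀ y : ℝ, 2 ≤ y → |(primePi y : ℝ) - alpha n y| ≤ c * y / (Real.log y) ^ (n + 1)) :
    ∃ K : ℝ, 0 < K ∧ ∀ y : ℝ, 2 ≤ y → (primePi y : ℝ) ≤ K * (y / Real.log y) := by
  set A : ℝ := ∑ i ∈ Finset.range n, (Nat.factorial i : ℝ) with hA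
  have hA0 : 0 ≤ A := Finset.sum_nonneg fun i _ => by positivity
  refine ⟨4 + c + A, by positivity, fun y hy => ?_⟩
  have hly : 0 < Real.log y := Real.log_pos (by linarith)
  have hyl : Real.log y < y := by
    nlinarith [Real.log_lt_sub_one_of_pos (show (0:ℝ) < y by linarith)
      (show y ≠ 1 by linarith)]
  have hq1 : 1 < y / Real.log y := (one_lt_div hly).mpr hyl
  rcases lt_or_ge y 3 with h3 | h3
  · have : (primePi y : ℝ) ≤ y + 1 := primePi_le (by linarith)
    nlinarith [hc.le, hA0]
  · have hl1 : 1 ≤ Real.log y := by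
      have : Real.log 3 ≤ Real.log y := Real.log_le_log (by norm_num) h3
      have h3e : (Real.exp 1) ≤ 3 := by
        have := Real.exp_one_lt_d9
        linarith
      calc (1:ℝ) = Real.log (Real.exp 1) := (Real.log_exp 1).symm
      _ ≤ Real.log 3 := Real.log_le_log (Real.exp_pos 1) h3e
      _ ≤ Real.log y := this
    have hbd := h y hy
    have halpha : alpha n y ≤ A * (y / Real.log y) := by
      rw [alpha]
      have hsum : ∑ i ∈ Finset.range n, (Nat.factorial i : ℝ) / (Real.log y) ^ i ≤ A := by
        apply Finset.sum_le_sum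
        intro i _
        have h1 : (1:ℝ) ≤ (Real.log y) ^ i := one_le_pow₀ hl1
        have h2 : (0:ℝ) ≤ (Nat.factorial i : ℝ) := by positivity
        rw [div_le_iff₀ (by linarith)]
        nlinarith
      have : 0 ≤ y / Real.log y := by positivity
      nlinarith
    have herr : c * y / (Real.log y) ^ (n + 1) ≤ c * (y / Real.log y) := by
      rw [div_le_iff₀ (by positivity)]
      have h1 : Real.log y ≤ (Real.log y) ^ (n+1) := by
        calc Real.log y = (Real.log y)^1 := (pow_one _).symm
        _ ≤ (Real.log y) ^ (n+1) := pow_le_pow_right₀ hl1 (by omega)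
      have : 0 ≤ c * (y / Real.log y) := by positivity
      calc c * y = c * (y / Real.log y) * Real.log y := by field_simp
      _ ≤ c * (y / Real.log y) * (Real.log y)^(n+1) := by nlinarith
    have := abs_le.mp hbd
    nlinarith [hq1]

lemma mertens_dyadic {K : ℝ} (hK : 0 < K)
    (hcheb : ∀ y : ℝ, 2 ≤ y → (primePi y : ℝ) ≤ K * (y / Real.log y)) :
    ∀ m : ℕ, 1 ≤ m →
      ∑ p ∈ primesUpTo ((2 ^ m : ℕ) : ℝ), ((p : ℝ))⁻¹ ≤
        (2 * K / Real.log 2 + 1) * (harmonic m : ℝ) := by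
  set C : ℝ := 2 * K / Real.log 2 + 1 with hC
  clear_value C
  have hl2 : 0 < Real.log 2 := Real.log_pos (by norm_num)
  have hC1 : 1 ≤ C := by
    have : 0 ≤ 2 * K / Real.log 2 := by positivity
    linarith
  intro m hm
  induction m, hm using Nat.le_induction with
  | base =>
    have h2 : primesUpTo ((2 ^ 1 : ℕ) : ℝ) = {2} := by
      rw [primesUpTo_natCast]
      decide
    rw [h2]
    simp only [Finset.sum_singleton, harmonic_succ, harmonic_zero]
    push_cast
    norm_num
    linarith
  | succ m hm ih =>
    set B := primesUpTo ((2 ^ m : ℕ) : ℝ)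
    set A := primesUpTo ((2 ^ (m+1) : ℕ) : ℝ)
    have hBA : B ⊆ A := primesUpTo_mono (by
      have : (2:ℕ)^m ≤ 2^(m+1) := Nat.pow_le_pow_right (by norm_num) (by omega)
      exact_mod_cast this)
    have hsplit : ∑ p ∈ A, ((p:ℝ))⁻¹ = ∑ p ∈ B, ((p:ℝ))⁻¹ + ∑ p ∈ A \ B, ((p:ℝ))⁻¹ := by
      rw [← Finset.sum_sdiff hBA]; ring
    have hcardA : ((A.card : ℝ)) ≤ K * (2^(m+1) / ((m+1) * Real.log 2)) := by
      have h2m : (2:ℝ) ≤ ((2 ^ (m+1) : ℕ) : ℝ) := by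
        have : (2:ℕ) ≤ 2^(m+1) := Nat.one_lt_two_pow_iff.mpr (by omega)
        exact_mod_cast this
      have := hcheb _ h2m
      have hlog : Real.log ((2 ^ (m+1) : ℕ) : ℝ) = (m+1) * Real.log 2 := by
        push_cast
        rw [Real.log_pow]
        push_cast; ring
      rw [hlog] at this
      calc ((A.card : ℝ)) = (primePi ((2 ^ (m+1) : ℕ) : ℝ) : ℝ) := rfl
      _ ≤ K * (((2 ^ (m+1) : ℕ) : ℝ) / ((m+1) * Real.log 2)) := this
      _ = K * ((2:ℝ)^(m+1) / ((m+1) * Real.log 2)) := by push_cast; ring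
    have htail : ∑ p ∈ A \ B, ((p:ℝ))⁻¹ ≤ (A.card : ℝ) * ((2:ℝ)^m)⁻¹ := by
      have hbd : ∀ p ∈ A \ B, ((p:ℝ))⁻¹ ≤ ((2:ℝ)^m)⁻¹ := by
        intro p hp
        rw [Finset.mem_sdiff] at hp
        obtain ⟨hpA, hpB⟩ := hp
        have hgt : 2^m < p := by
          by_contra hle
          push_neg at hle
          apply hpB
          have hpA' : p ∈ primesUpTo ((2 ^ (m+1) : ℕ) : ℝ) := hpA
          rw [primesUpTo_natCast, Finset.mem_filter] at hpA'
          show p ∈ primesUpTo ((2 ^ m : ℕ) : ℝ)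
          rw [primesUpTo_natCast, Finset.mem_filter]
          exact ⟨Finset.mem_range.mpr (by omega), hpA'.2⟩
        apply inv_anti₀ (by positivity)
        exact_mod_cast hgt.le
      calc ∑ p ∈ A \ B, ((p:ℝ))⁻¹ ≤ (A \ B).card • ((2:ℝ)^m)⁻¹ :=
        Finset.sum_le_card_nsmul _ _ _ hbd
      _ = ((A \ B).card : ℝ) * ((2:ℝ)^m)⁻¹ := by rw [nsmul_eq_mul]
      _ ≤ (A.card : ℝ) * ((2:ℝ)^m)⁻¹ := by
          gcongr
          exact Finset.sdiff_subset
    have htail2 : ∑ p ∈ A \ B, ((p:ℝ))⁻¹ ≤ C / (m+1) := by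
      have key : (A.card : ℝ) * ((2:ℝ)^m)⁻¹ ≤ 2 * K / Real.log 2 / (m+1) := by
        calc (A.card : ℝ) * ((2:ℝ)^m)⁻¹
            ≤ K * ((2:ℝ)^(m+1) / ((m+1) * Real.log 2)) * ((2:ℝ)^m)⁻¹ := by
              gcongr
          _ = 2 * K / Real.log 2 / (m+1) := by
              field_simp
              ring
      have : C / (m+1) = 2 * K / Real.log 2 / (m+1) + 1 / (m+1) := by
        rw [hC]; ring
      have h1 : (0:ℝ) ≤ 1 / (m+1) := by positivity
      linarith [htail]
    have hhar : (harmonic (m+1) : ℝ) = (harmonic m : ℝ) + ((m:ℝ)+1)⁻¹ := by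
      rw [harmonic_succ]
      push_cast
      ring
    rw [hsplit, hhar]
    have : C * ((m:ℝ)+1)⁻¹ = C / (m+1) := by ring
    nlinarith [htail2, ih, hC1]

lemma mertens_real {K : ℝ} (hK : 0 < K)
    (hcheb : ∀ y : ℝ, 2 ≤ y → (primePi y : ℝ) ≤ K * (y / Real.log y)) :
    ∃ C : ℝ, 0 < C ∧ ∀ y : ℝ, 16 ≤ y →
      ∑ p ∈ primesUpTo y, ((p : ℝ))⁻¹ ≤ C * Real.log (Real.log y) := by
  have hl2 : 0 < Real.log 2 := Real.log_pos (by norm_num)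
  set C0 : ℝ := 2 * K / Real.log 2 + 1 with hC0
  clear_value C0
  have hC0pos : 0 < C0 := by rw [hC0]; positivity
  refine ⟨3 * C0, by positivity, fun y hy => ?_⟩
  set L := Real.log y with hL
  have hLbig : 4 * Real.log 2 ≤ L := by
    rw [hL]
    calc 4 * Real.log 2 = Real.log (2^4) := by rw [Real.log_pow]; push_cast; ring
    _ ≤ Real.log y := Real.log_le_log (by norm_num) (by norm_num at hy ⊢; linarith)
  have hl2d := Real.log_two_gt_d9
  have hl2u := Real.log_two_lt_d9
  have hed := Real.exp_one_lt_d9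
  have hL1 : 1 ≤ Real.log L := by
    have he : Real.exp 1 ≤ L := by nlinarith
    calc (1:ℝ) = Real.log (Real.exp 1) := (Real.log_exp 1).symm
    _ ≤ Real.log L := Real.log_le_log (Real.exp_pos 1) he
  set m : ℕ := ⌊L / Real.log 2⌋₊ + 1 with hm
  have hm1 : 1 ≤ m := by omega
  have hLpos : 0 < L := by nlinarith
  have hmle : (m : ℝ) ≤ 2 * L := by
    have h1 : (⌊L / Real.log 2⌋₊ : ℝ) ≤ L / Real.log 2 := Nat.floor_le (by positivity)
    have h2 : (m : ℝ) = (⌊L / Real.log 2⌋₊ : ℝ) + 1 := by rw [hm]; push_cast; ring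
    have h3 : L / Real.log 2 ≤ 1.45 * L := by
      rw [div_le_iff₀ hl2]; nlinarith
    rw [h2]
    nlinarith
  have hy2m : y ≤ ((2 ^ m : ℕ) : ℝ) := by
    have h1 : L / Real.log 2 < m := by
      rw [hm]; push_cast; exact Nat.lt_floor_add_one _
    have h2 : L < m * Real.log 2 := by
      rw [div_lt_iff₀ hl2] at h1; linarith
    have h3 : Real.log ((2 ^ m : ℕ) : ℝ) = m * Real.log 2 := by
      push_cast; rw [Real.log_pow]
    have hy0 : 0 < y := by linarith
    have := Real.exp_lt_exp.mpr (h2.trans_le (le_of_eq h3.symm))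
    rw [hL] at this
    rw [Real.exp_log hy0, Real.exp_log (by positivity)] at this
    exact this.le
  have hsub : primesUpTo y ⊆ primesUpTo ((2 ^ m : ℕ) : ℝ) := primesUpTo_mono hy2m
  have hS : ∑ p ∈ primesUpTo y, ((p : ℝ))⁻¹ ≤ ∑ p ∈ primesUpTo ((2 ^ m : ℕ) : ℝ), ((p : ℝ))⁻¹ := by
    apply Finset.sum_le_sum_of_subset_of_nonneg hsub
    intro i _ _
    positivity
  have hD := mertens_dyadic hK hcheb m hm1
  rw [← hC0] at hD
  have hH : (harmonic m : ℝ) ≤ 1 + Real.log m := harmonic_le_one_add_log m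
  have hlogm : Real.log m ≤ Real.log 2 + Real.log L := by
    calc Real.log m ≤ Real.log (2 * L) :=
      Real.log_le_log (by exact_mod_cast Nat.pos_of_ne_zero (by omega)) hmle
    _ = Real.log 2 + Real.log L := Real.log_mul (by norm_num) (by positivity)
  calc ∑ p ∈ primesUpTo y, ((p : ℝ))⁻¹ ≤ C0 * (harmonic m : ℝ) := hS.trans hD
  _ ≤ C0 * (1 + Real.log 2 + Real.log L) := by nlinarith
  _ ≤ C0 * (3 * Real.log L) := by nlinarith
  _ = 3 * C0 * Real.log (Real.log y) := by rw [hL]; ring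

theorem stmt1 (n : ℕ) (hn : 1 ≤ n)
    (h : ∃ c : ℝ, 0 < c ∧ ∀ y : ℝ, 2 ≤ y →
      |(primePi y : ℝ) - alpha n y| ≤ c * y / (Real.log y) ^ (n + 1)) :
    (fun x : ℝ =>
        (∑ p ∈ primesUpTo (Real.sqrt x), (primePi (x / (p : ℝ)) : ℝ))
          - ∑ p ∈ primesUpTo (Real.sqrt x), alpha n (x / (p : ℝ)))
      =O[atTop]
    (fun x : ℝ => x * Real.log (Real.log x) / (Real.log x) ^ (n + 1)) := by
  obtain ⟨c, hc, hbd⟩ := h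
  obtain ⟨K, hK, hcheb⟩ := chebyshev hc hbd
  obtain ⟨C, hCpos, hmert⟩ := mertens_real hK hcheb
  rw [Asymptotics.isBigO_iff]
  refine ⟨c * 2^(n+1) * C, ?_⟩
  filter_upwards [Filter.eventually_ge_atTop (256:ℝ)] with x hx
  have hx0 : (0:ℝ) < x := by linarith
  set sx := Real.sqrt x with hsx
  have hsx16 : 16 ≤ sx := by
    rw [hsx]
    calc (16:ℝ) = Real.sqrt 256 := by
          rw [show (256:ℝ) = 16^2 by norm_num, Real.sqrt_sq (by norm_num : (0:ℝ) ≤ 16)]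
    _ ≤ Real.sqrt x := Real.sqrt_le_sqrt hx
  have hsx0 : 0 < sx := by linarith
  have hlogx2 : 2 ≤ Real.log x := by
    have h256 : Real.log 256 ≤ Real.log x := Real.log_le_log (by norm_num) hx
    have : Real.log 256 = 8 * Real.log 2 := by
      rw [show (256:ℝ) = 2^8 by norm_num, Real.log_pow]; push_cast; ring
    nlinarith [Real.log_two_gt_d9]
  have hlogsx : Real.log sx = Real.log x / 2 := Real.log_sqrt hx0.le
  have hlogsx_pos : 0 < Real.log sx := by rw [hlogsx]; linarith
  have hloglogx_pos : 0 < Real.log (Real.log x) := Real.log_pos (by linarith)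
  have hterm : ∀ p ∈ primesUpTo sx,
      |(primePi (x / (p : ℝ)) : ℝ) - alpha n (x / (p : ℝ))| ≤
        (c * 2^(n+1) * x / (Real.log x)^(n+1)) * ((p : ℝ))⁻¹ := by
    intro p hp
    obtain ⟨hple, hpprime⟩ := (mem_primesUpTo hsx0.le).mp hp
    have hp2 : (2:ℝ) ≤ p := by exact_mod_cast hpprime.two_le
    have hp0 : (0:ℝ) < p := by linarith
    have hxp : sx ≤ x / p := by
      rw [le_div_iff₀ hp0]
      calc sx * p ≤ sx * sx := by nlinarith
      _ = x := Real.mul_self_sqrt hx0.le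
    have hxp2 : (2:ℝ) ≤ x / p := by linarith
    have hb := hbd (x / p) hxp2
    have hlog2xp : Real.log x / 2 ≤ Real.log (x / p) := by
      rw [← hlogsx]
      exact Real.log_le_log hsx0 hxp
    have hlxp_pos : 0 < Real.log (x / p) := by linarith
    have hpow : (Real.log x / 2)^(n+1) ≤ (Real.log (x / p))^(n+1) := by
      apply pow_le_pow_left₀ (by linarith) hlog2xp
    have key : c * (x / p) / (Real.log (x / p))^(n+1) ≤
        (c * 2^(n+1) * x / (Real.log x)^(n+1)) * ((p : ℝ))⁻¹ := by
      have h1 : c * (x / p) / (Real.log (x / p))^(n+1) ≤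
          c * (x / p) / ((Real.log x / 2)^(n+1)) := by
        gcongr
      calc c * (x / p) / (Real.log (x / p))^(n+1)
          ≤ c * (x / p) / ((Real.log x / 2)^(n+1)) := h1
        _ = (c * 2^(n+1) * x / (Real.log x)^(n+1)) * ((p : ℝ))⁻¹ := by
            rw [div_pow]
            field_simp
    exact hb.trans key
  have habs : |∑ p ∈ primesUpTo sx, ((primePi (x / (p : ℝ)) : ℝ) - alpha n (x / (p : ℝ)))| ≤
      (c * 2^(n+1) * x / (Real.log x)^(n+1)) * ∑ p ∈ primesUpTo sx, ((p : ℝ))⁻¹ := by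
    calc |∑ p ∈ primesUpTo sx, ((primePi (x / (p : ℝ)) : ℝ) - alpha n (x / (p : ℝ)))|
        ≤ ∑ p ∈ primesUpTo sx, |(primePi (x / (p : ℝ)) : ℝ) - alpha n (x / (p : ℝ))| :=
          Finset.abs_sum_le_sum_abs _ _
      _ ≤ ∑ p ∈ primesUpTo sx, (c * 2^(n+1) * x / (Real.log x)^(n+1)) * ((p : ℝ))⁻¹ :=
          Finset.sum_le_sum hterm
      _ = (c * 2^(n+1) * x / (Real.log x)^(n+1)) * ∑ p ∈ primesUpTo sx, ((p : ℝ))⁻¹ := by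
          rw [← Finset.mul_sum]
  have hmert' : ∑ p ∈ primesUpTo sx, ((p : ℝ))⁻¹ ≤ C * Real.log (Real.log x) := by
    calc ∑ p ∈ primesUpTo sx, ((p : ℝ))⁻¹ ≤ C * Real.log (Real.log sx) := hmert sx hsx16
    _ ≤ C * Real.log (Real.log x) := by
        have := Real.log_le_log hlogsx_pos (by rw [hlogsx]; linarith : Real.log sx ≤ Real.log x)
        nlinarith
  rw [Real.norm_eq_abs, Real.norm_eq_abs]
  have hsub : (∑ p ∈ primesUpTo sx, (primePi (x / (p : ℝ)) : ℝ))
      - ∑ p ∈ primesUpTo sx, alpha n (x / (p : ℝ))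
      = ∑ p ∈ primesUpTo sx, ((primePi (x / (p : ℝ)) : ℝ) - alpha n (x / (p : ℝ))) := by
    rw [Finset.sum_sub_distrib]
  rw [hsub]
  have hrhs : |x * Real.log (Real.log x) / (Real.log x)^(n+1)|
      = x * Real.log (Real.log x) / (Real.log x)^(n+1) := by
    apply abs_of_nonneg
    positivity
  rw [hrhs]
  have hM : 0 ≤ c * 2^(n+1) * x / (Real.log x)^(n+1) := by positivity
  calc |∑ p ∈ primesUpTo sx, ((primePi (x / (p : ℝ)) : ℝ) - alpha n (x / (p : ℝ)))|
      ≤ (c * 2^(n+1) * x / (Real.log x)^(n+1)) * ∑ p ∈ primesUpTo sx, ((p : ℝ))⁻¹ := habs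
    _ ≤ (c * 2^(n+1) * x / (Real.log x)^(n+1)) * (C * Real.log (Real.log x)) := by
        apply mul_le_mul_of_nonneg_left hmert' hM
    _ = c * 2^(n+1) * C * (x * Real.log (Real.log x) / (Real.log x)^(n+1)) := by
        field_simp
end

section
/- Let d₁, d₂ > 0 and for an integer i ≥ 0 and x ∈ [2, ∞] define I(i, x) = d₁·∫_2^x (log y)^{i − 3/4}·exp(−d₂·√(log y))/y dy. Then for all integers i ≥ ℓ ≥ 0 and all real x ≥ e, I(i, x)/(log x)^i ≤ I(ℓ, ∞)/(log x)^ℓ, and in particular I(ℓ, ∞) is finite. -/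
open Filter MeasureTheory Set Real Topology

/-- `I(i, x)` for finite `x`: `d₁ ∫_2^x (log y)^{i - 3/4} exp(-d₂ √(log y)) / y dy`. -/
noncomputable def Ifin (d₁ d₂ : ℝ) (i : ℕ) (x : ℝ) : ℝ :=
  d₁ * ∫ y in (2 : ℝ)..x,
    (Real.log y) ^ ((i : ℝ) - 3 / 4) * Real.exp (-d₂ * Real.sqrt (Real.log y)) / y

/-- `I(i, ∞)`: `d₁ ∫_2^∞ (log y)^{i - 3/4} exp(-d₂ √(log y)) / y dy`. -/
noncomputable def Iinf (d₁ d₂ : ℝ) (i : ℕ) : ℝ :=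
  d₁ * ∫ y in Set.Ioi (2 : ℝ),
    (Real.log y) ^ ((i : ℝ) - 3 / 4) * Real.exp (-d₂ * Real.sqrt (Real.log y)) / y

lemma aux_sqrt_atTop : Tendsto Real.sqrt atTop atTop := by
  apply (tendsto_rpow_atTop (by norm_num : (0:ℝ) < 1/2)).congr'
  filter_upwards with t using (Real.sqrt_eq_rpow t).symm

lemma aux_integrable (a b c : ℝ) (hb : 0 < b) (hc : 0 < c) :
    IntegrableOn (fun t : ℝ => t ^ a * Real.exp (-b * Real.sqrt t)) (Set.Ioi c) := by
  have hcont : ContinuousOn (fun t : ℝ => t ^ a * Real.exp (-b * Real.sqrt t)) (Set.Ici c) := by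
    apply ContinuousOn.mul
    · exact continuousOn_id.rpow_const (fun t ht => Or.inl (ne_of_gt (lt_of_lt_of_le hc ht)))
    · exact Real.continuous_exp.comp_continuousOn
        (continuousOn_const.mul (Real.continuous_sqrt.continuousOn))
  have htend : Tendsto (fun t : ℝ =>
      (t ^ a * Real.exp (-b * Real.sqrt t)) / t ^ (-2 : ℝ)) atTop (𝓝 0) := by
    have h1 := (tendsto_rpow_mul_exp_neg_mul_atTop_nhds_zero (2*(a+2)) b hb).comp aux_sqrt_atTop
    apply h1.congr'
    filter_upwards [eventually_gt_atTop (0:ℝ)] with t ht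
    have hs : Real.sqrt t ^ (2*(a+2) : ℝ) = t ^ (a + 2) := by
      rw [Real.rpow_mul (Real.sqrt_nonneg t)]
      rw [show ((2:ℝ)) = ((2:ℕ):ℝ) by norm_num, Real.rpow_natCast, Real.sq_sqrt ht.le]
    simp only [Function.comp_apply, hs]
    rw [div_eq_mul_inv, ← Real.rpow_neg ht.le, neg_neg, mul_right_comm,
      ← Real.rpow_add ht]
  have hO : (fun t : ℝ => t ^ a * Real.exp (-b * Real.sqrt t)) =O[atTop]
      fun t : ℝ => t ^ (-2 : ℝ) := by
    apply Asymptotics.isBigO_of_div_tendsto_nhds ?_ 0 htend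
    filter_upwards [eventually_gt_atTop (0:ℝ)] with t ht h
    exact absurd h (by positivity)
  exact (hcont.locallyIntegrableOn measurableSet_Ici).integrableOn_of_isBigO_atTop hO
    ⟨Set.Ioi c, Ioi_mem_atTop c, integrableOn_Ioi_rpow_of_lt (by norm_num) hc⟩ |>.mono_set
    Set.Ioi_subset_Ici_self

lemma aux_img : Real.exp '' Set.Ioi (Real.log 2) = Set.Ioi (2:ℝ) := by
  ext z
  constructor
  · rintro ⟨t, ht, rfl⟩
    have := Real.exp_lt_exp.mpr ht
    rwa [Real.exp_log (by norm_num)] at this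
  · intro hz
    exact ⟨Real.log z, Real.log_lt_log (by norm_num) hz, Real.exp_log (lt_trans (by norm_num) hz)⟩

lemma aux_integrableOn (a b : ℝ) (hb : 0 < b) :
    IntegrableOn (fun y : ℝ =>
      (Real.log y) ^ a * Real.exp (-b * Real.sqrt (Real.log y)) / y) (Set.Ioi (2:ℝ)) := by
  rw [← aux_img, integrableOn_image_iff_integrableOn_abs_deriv_smul measurableSet_Ioi
    (fun t _ => (Real.hasDerivAt_exp t).hasDerivWithinAt) (Real.exp_injective.injOn) _]
  apply (aux_integrable a b (Real.log 2) hb (Real.log_pos one_lt_two)).congr_fun _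
    measurableSet_Ioi
  intro t _
  have h := Real.exp_ne_zero t
  simp only [smul_eq_mul, Real.log_exp, abs_of_pos (Real.exp_pos t)]
  field_simp

noncomputable def faux (d₂ : ℝ) (j : ℕ) (y : ℝ) : ℝ :=
  (Real.log y) ^ ((j : ℝ) - 3 / 4) * Real.exp (-d₂ * Real.sqrt (Real.log y)) / y

theorem stmt13 (d₁ d₂ : ℝ) (hd₁ : 0 < d₁) (hd₂ : 0 < d₂) (i ℓ : ℕ) (hiℓ : ℓ ≤ i) :
    (∀ x : ℝ, Real.exp 1 ≤ x →
      Ifin d₁ d₂ i x / (Real.log x) ^ i ≤ Iinf d₁ d₂ ℓ / (Real.log x) ^ ℓ)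
    ∧ IntegrableOn
        (fun y : ℝ =>
          (Real.log y) ^ ((ℓ : ℝ) - 3 / 4) * Real.exp (-d₂ * Real.sqrt (Real.log y)) / y)
        (Set.Ioi (2 : ℝ)) := by
  have hint : IntegrableOn (faux d₂ ℓ) (Set.Ioi (2:ℝ)) :=
    aux_integrableOn ((ℓ:ℝ) - 3/4) d₂ hd₂
  refine ⟨?_, hint⟩
  intro x hx
  set L := Real.log x with hLdef
  have hx2 : (2:ℝ) ≤ x := le_trans (by nlinarith [Real.add_one_le_exp (1:ℝ)]) hx
  have hL1 : 1 ≤ L := by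
    rw [hLdef, ← Real.log_exp 1]
    exact Real.log_le_log (Real.exp_pos 1) hx
  have hL0 : (0:ℝ) < L := lt_of_lt_of_le one_pos hL1
  have hcont : ∀ j : ℕ, ContinuousOn (faux d₂ j) (Set.Icc 2 x) := by
    intro j
    have hlog : ContinuousOn Real.log (Set.Icc 2 x) :=
      Real.continuousOn_log.mono (fun y hy => by
        simp only [Set.mem_compl_iff, Set.mem_singleton_iff]
        exact ne_of_gt (lt_of_lt_of_le two_pos hy.1))
    apply ContinuousOn.div
    · exact (hlog.rpow_const (fun y hy => Or.inl
        (ne_of_gt (Real.log_pos (lt_of_lt_of_le one_lt_two hy.1))))).mul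
        (Real.continuous_exp.comp_continuousOn (continuousOn_const.mul hlog.sqrt))
    · exact continuousOn_id
    · exact fun y hy => ne_of_gt (lt_of_lt_of_le two_pos hy.1)
  have hII : ∀ j : ℕ, IntervalIntegrable (faux d₂ j) volume 2 x := by
    intro j
    apply ContinuousOn.intervalIntegrable
    rw [Set.uIcc_of_le hx2]
    exact hcont j
  have hpt : ∀ y ∈ Set.Icc (2:ℝ) x, faux d₂ i y ≤ L ^ (i - ℓ) * faux d₂ ℓ y := by
    intro y hy
    have hy1 : (1:ℝ) < y := lt_of_lt_of_le one_lt_two hy.1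
    have ht0 : 0 < Real.log y := Real.log_pos hy1
    have htL : Real.log y ≤ L := Real.log_le_log (lt_trans one_pos hy1) hy.2
    have hsplit : (Real.log y) ^ ((i : ℝ) - 3 / 4)
        = (Real.log y) ^ ((ℓ : ℝ) - 3 / 4) * (Real.log y) ^ (i - ℓ) := by
      rw [← Real.rpow_natCast (Real.log y) (i - ℓ), ← Real.rpow_add ht0]
      congr 1
      have h1 : ((i - ℓ : ℕ) : ℝ) = (i : ℝ) - (ℓ : ℝ) := by push_cast [hiℓ]; ring
      rw [h1]; ring
    have hpow : (Real.log y) ^ (i - ℓ) ≤ L ^ (i - ℓ) := pow_le_pow_left₀ ht0.le htL _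
    have hy0 : 0 < y := lt_trans one_pos hy1
    simp only [faux, hsplit]
    rw [show L ^ (i-ℓ) * ((Real.log y) ^ ((ℓ : ℝ) - 3 / 4)
        * Real.exp (-d₂ * Real.sqrt (Real.log y)) / y)
      = (Real.log y) ^ ((ℓ : ℝ) - 3 / 4) * L ^ (i-ℓ)
        * Real.exp (-d₂ * Real.sqrt (Real.log y)) / y by ring]
    gcongr
  have hmono1 : (∫ y in (2:ℝ)..x, faux d₂ i y)
      ≤ L ^ (i - ℓ) * ∫ y in (2:ℝ)..x, faux d₂ ℓ y := by
    rw [← intervalIntegral.integral_const_mul]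
    exact intervalIntegral.integral_mono_on hx2 (hII i) ((hII ℓ).const_mul _) hpt
  have hnn : 0 ≤ᵐ[volume.restrict (Set.Ioi (2:ℝ))] faux d₂ ℓ := by
    rw [EventuallyLE, ae_restrict_iff' measurableSet_Ioi]
    refine ae_of_all _ fun y hy => ?_
    have ht0 : 0 < Real.log y := Real.log_pos (lt_trans one_lt_two hy)
    have hy0 : (0:ℝ) < y := lt_trans two_pos hy
    simp only [faux, Pi.zero_apply]
    positivity
  have hmono2 : (∫ y in (2:ℝ)..x, faux d₂ ℓ y) ≤ ∫ y in Set.Ioi (2:ℝ), faux d₂ ℓ y := by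
    rw [intervalIntegral.integral_of_le hx2]
    exact setIntegral_mono_set hint hnn (HasSubset.Subset.eventuallyLE Set.Ioc_subset_Ioi_self)
  have hJ0 : 0 ≤ ∫ y in Set.Ioi (2:ℝ), faux d₂ ℓ y := integral_nonneg_of_ae hnn
  have hAJ : (∫ y in (2:ℝ)..x, faux d₂ i y)
      ≤ L ^ (i - ℓ) * ∫ y in Set.Ioi (2:ℝ), faux d₂ ℓ y :=
    le_trans hmono1 (mul_le_mul_of_nonneg_left hmono2 (by positivity))
  show d₁ * (∫ y in (2:ℝ)..x, faux d₂ i y) / L ^ i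
      ≤ d₁ * (∫ y in Set.Ioi (2:ℝ), faux d₂ ℓ y) / L ^ ℓ
  set A := ∫ y in (2:ℝ)..x, faux d₂ i y
  set J := ∫ y in Set.Ioi (2:ℝ), faux d₂ ℓ y
  have hpow : L ^ i = L ^ (i - ℓ) * L ^ ℓ := by rw [← pow_add]; congr 1; omega
  rw [div_le_div_iff₀ (by positivity) (by positivity)]
  calc d₁ * A * L ^ ℓ ≤ d₁ * (L ^ (i - ℓ) * J) * L ^ ℓ := by
        exact mul_le_mul_of_nonneg_right (mul_le_mul_of_nonneg_left hAJ hd₁.le) (by positivity)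
    _ = d₁ * J * L ^ i := by rw [hpow]; ring
end
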